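/- Let Y = [[2,2,2],[0,2,2],[0,0,2]]. Then Y·Yᵀ = [[12,8,4],[8,8,4],[4,4,4]], this product has rank 3, all entries positive, and its cross-ratio group is dense in ℝ>0. -/

import Mathlib

/-- The cross-ratio of the 2×2 submatrix of `M` with rows `i₁,i₂` and columns `j₁,j₂`. -/
noncomputable def crr3 (M : Matrix (Fin 3) (Fin 3) ℝ) (i₁ i₂ j₁ j₂ : Fin 3) : ℝ :=
  (M i₁ j₁ * M i₂ j₂) / (M i₁ j₂ * M i₂ j₁)

/-- The cross-ratio group of `M`. -/
noncomputable def CRG (M : Matrix (Fin 3) (Fin 3) ℝ) : Subgroup {x : ℝ // 0 < x} :=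
  Subgroup.closure {x | ∃ i₁ i₂ j₁ j₂ : Fin 3, i₁ ≠ i₂ ∧ j₁ ≠ j₂ ∧ (x : ℝ) = crr3 M i₁ i₂ j₁ j₂}


/-- exp as an order iso onto the positive reals. -/
noncomputable def epos : ℝ ≃o {x : ℝ // 0 < x} := Real.expOrderIso

lemma epos_coe (x : ℝ) : ((epos x : {x : ℝ // 0 < x}) : ℝ) = Real.exp x :=
  Real.coe_expOrderIso_apply x

/-- Any subgroup of the positive reals containing 2 and 3 is dense. -/
lemma dense_of_two_three_mem (S : Subgroup {x : ℝ // 0 < x})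
    (h2 : (⟨2, by norm_num⟩ : {x : ℝ // 0 < x}) ∈ S)
    (h3 : (⟨3, by norm_num⟩ : {x : ℝ // 0 < x}) ∈ S) :
    Dense (S : Set {x : ℝ // 0 < x}) := by
  set L : AddSubgroup ℝ :=
    { carrier := {y : ℝ | epos y ∈ S}
      zero_mem' := by
        have h : epos 0 = (1 : {x : ℝ // 0 < x}) := by
          ext; rw [epos_coe]; simp
        simp only [Set.mem_setOf_eq, h]; exact S.one_mem
      add_mem' := by
        intro a b ha hb
        have h : epos (a + b) = epos a * epos b := by
          ext; simp only [epos_coe, Real.exp_add]; rfl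
        simp only [Set.mem_setOf_eq, h]; exact S.mul_mem ha hb
      neg_mem' := by
        intro a ha
        have h : epos (-a) = (epos a)⁻¹ := by
          ext; simp only [epos_coe, Real.exp_neg]; rfl
        simp only [Set.mem_setOf_eq, h]; exact S.inv_mem ha } with hLdef
  have hlog2 : Real.log 2 ∈ L := by
    show epos (Real.log 2) ∈ S
    have h : epos (Real.log 2) = (⟨2, by norm_num⟩ : {x : ℝ // 0 < x}) := by
      ext; rw [epos_coe]; exact Real.exp_log (by norm_num)
    rw [h]; exact h2
  have hlog3 : Real.log 3 ∈ L := by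
    show epos (Real.log 3) ∈ S
    have h : epos (Real.log 3) = (⟨3, by norm_num⟩ : {x : ℝ // 0 < x}) := by
      ext; rw [epos_coe]; exact Real.exp_log (by norm_num)
    rw [h]; exact h3
  have h2pos : (0:ℝ) < Real.log 2 := Real.log_pos (by norm_num)
  have h3pos : (0:ℝ) < Real.log 3 := Real.log_pos (by norm_num)
  have hdense : Dense (L : Set ℝ) := by
    rcases L.dense_or_cyclic with h | ⟨a, ha⟩
    · exact h
    · exfalso
      rw [ha, AddSubgroup.mem_closure_singleton] at hlog2 hlog3
      obtain ⟨n, hn⟩ := hlog2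
      obtain ⟨m, hm⟩ := hlog3
      rw [zsmul_eq_mul] at hn hm
      have key : (m : ℝ) * Real.log 2 = (n : ℝ) * Real.log 3 := by
        rw [← hn, ← hm]; ring
      have habs : (m.natAbs : ℝ) * Real.log 2 = (n.natAbs : ℝ) * Real.log 3 := by
        have h' := congrArg abs key
        have cm : ((m.natAbs : ℝ)) = |(m:ℝ)| := by
          rw [Nat.cast_natAbs]; exact Int.cast_abs
        have cn : ((n.natAbs : ℝ)) = |(n:ℝ)| := by
          rw [Nat.cast_natAbs]; exact Int.cast_abs
        rwa [abs_mul, abs_mul, abs_of_pos h2pos, abs_of_pos h3pos, ← cm, ← cn] at h'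
      have hm0 : m.natAbs ≠ 0 := by
        simp only [Int.natAbs_ne_zero]
        rintro rfl
        rw [Int.cast_zero, zero_mul] at hm
        exact h3pos.ne' hm.symm
      have hn0 : n.natAbs ≠ 0 := by
        simp only [Int.natAbs_ne_zero]
        rintro rfl
        rw [Int.cast_zero, zero_mul] at hn
        exact h2pos.ne' hn.symm
      have hpow : (2:ℝ) ^ m.natAbs = (3:ℝ) ^ n.natAbs := by
        have := congrArg Real.exp habs
        rwa [← Real.log_pow, ← Real.log_pow, Real.exp_log (by positivity),
          Real.exp_log (by positivity)] at this
      have hnat : (2:ℕ) ^ m.natAbs = 3 ^ n.natAbs := by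
        have : ((2 ^ m.natAbs : ℕ) : ℝ) = ((3 ^ n.natAbs : ℕ) : ℝ) := by push_cast; exact hpow
        exact_mod_cast this
      have hdvd : 2 ∣ (3:ℕ) ^ n.natAbs := hnat ▸ dvd_pow_self 2 hm0
      have := Nat.Prime.dvd_of_dvd_pow Nat.prime_two hdvd
      norm_num at this
  -- transfer density through the continuous surjection exp
  set f : ℝ → {x : ℝ // 0 < x} := fun y => ⟨Real.exp y, Real.exp_pos y⟩ with hf
  have hfc : Continuous f := Real.continuous_exp.subtype_mk _
  have hfs : Function.Surjective f := by
    intro x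
    refine ⟨Real.log x, ?_⟩
    ext
    exact Real.exp_log x.2
  have hfe : ∀ y, f y = epos y := by
    intro y; ext; rw [epos_coe]
  have himg : f '' (L : Set ℝ) ⊆ (S : Set {x : ℝ // 0 < x}) := by
    rintro x ⟨y, hy, rfl⟩
    rw [hfe]
    exact hy
  have hd : Dense (f '' (L : Set ℝ)) := by
    rw [dense_iff_closure_eq]
    apply Set.eq_univ_of_univ_subset
    calc Set.univ = f '' closure (L : Set ℝ) := by
          rw [hdense.closure_eq, Set.image_univ, hfs.range_eq]
      _ ⊆ closure _ := image_closure_subset_closure_image hfc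
  exact hd.mono himg


lemma two_mem_CRG : (⟨2, by norm_num⟩ : {x : ℝ // 0 < x}) ∈ CRG !![12, 8, 4; 8, 8, 4; 4, 4, 4] := by
  apply Subgroup.subset_closure
  refine ⟨1, 2, 1, 2, by decide, by decide, ?_⟩
  show (2:ℝ) = _
  norm_num [crr3, Matrix.cons_val_one, Matrix.cons_val_two, Matrix.tail_cons, Matrix.head_cons, Matrix.vecHead, Matrix.vecTail,
    Function.comp]

lemma three_mem_CRG : (⟨3, by norm_num⟩ : {x : ℝ // 0 < x}) ∈ CRG !![12, 8, 4; 8, 8, 4; 4, 4, 4] := by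
  have h32 : (⟨3/2, by norm_num⟩ : {x : ℝ // 0 < x}) ∈ CRG !![12, 8, 4; 8, 8, 4; 4, 4, 4] := by
    apply Subgroup.subset_closure
    refine ⟨0, 1, 0, 1, by decide, by decide, ?_⟩
    show (3/2:ℝ) = _
    norm_num [crr3, Matrix.cons_val_one, Matrix.head_cons, Matrix.vecHead, Matrix.vecTail,
      Function.comp]
  have h := (CRG !![12, 8, 4; 8, 8, 4; 4, 4, 4]).mul_mem two_mem_CRG h32
  convert h using 1
  ext; show (3:ℝ) = 2 * (3/2); norm_num

/-- For Y = [[2,2,2],[0,2,2],[0,0,2]], the product Y·Yᵀ equals [[12,8,4],[8,8,4],[4,4,4]],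
has rank 3, positive entries, and dense cross-ratio group. -/
theorem Y_mul_Yt_good :
    (!![2, 2, 2; 0, 2, 2; 0, 0, 2] : Matrix (Fin 3) (Fin 3) ℝ) *
        (!![2, 2, 2; 0, 2, 2; 0, 0, 2] : Matrix (Fin 3) (Fin 3) ℝ).transpose =
      !![12, 8, 4; 8, 8, 4; 4, 4, 4] ∧
    (!![12, 8, 4; 8, 8, 4; 4, 4, 4] : Matrix (Fin 3) (Fin 3) ℝ).rank = 3 ∧
    (∀ i j, (0:ℝ) < !![12, 8, 4; 8, 8, 4; 4, 4, 4] i j) ∧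
    Dense ((CRG !![12, 8, 4; 8, 8, 4; 4, 4, 4] : Subgroup {x : ℝ // 0 < x}) :
      Set {x : ℝ // 0 < x}) := by
  refine ⟨?_, ?_, ?_, ?_⟩
  · ext i j
    fin_cases i <;> fin_cases j <;>
      simp [Matrix.mul_apply, Fin.sum_univ_three, Matrix.vecHead, Matrix.vecTail] <;> norm_num
  · have hdet : (!![12, 8, 4; 8, 8, 4; 4, 4, 4] : Matrix (Fin 3) (Fin 3) ℝ).det = 64 := by
      simp [Matrix.det_fin_three, Matrix.vecHead, Matrix.vecTail]; norm_num
    have hu : IsUnit (!![12, 8, 4; 8, 8, 4; 4, 4, 4] : Matrix (Fin 3) (Fin 3) ℝ) := by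
      rw [Matrix.isUnit_iff_isUnit_det, hdet]; norm_num
    rw [Matrix.rank_of_isUnit _ hu]; simp
  · intro i j
    fin_cases i <;> fin_cases j <;> norm_num [Matrix.vecHead, Matrix.vecTail]
  · exact dense_of_two_three_mem _ two_mem_CRG three_mem_CRG
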